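/- In the setting of the Dehornoy-type inductive limit (functions k, l : ℤ → ℤ with k(n), l(n) ≥ 2, presented group G̃ with generators gₙ (n ∈ ℤ) and relations g_{n-1}^{k(n)} = g_n^{l(n)}, elements a_{i,m}, subsemigroup P̃, subgroups G_(m), and P_(m) := P̃ ∩ G_(m)): for every m ≥ 0, every subgroup C of G_(m+1) that is convex with respect to P_(m+1) and contains g_m^{k(m+1)} also contains g_m and g_{m+1}. -/

import Mathlib

/-- The relators `g_{n-1}^{k n} * g_n^{-(l n)}` of the Dehornoy-type inductive limit. -/
def dehornoyRels (k l : ℤ → ℤ) : Set (FreeGroup ℤ) :=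
  {r | ∃ n : ℤ, r = FreeGroup.of (n - 1) ^ k n * FreeGroup.of n ^ (-(l n))}

/-- The presented group `G̃` with generators `gₙ (n : ℤ)` and relations
`g_{n-1}^{k n} = g_n^{l n}`. -/
abbrev Gtil (k l : ℤ → ℤ) : Type := PresentedGroup (dehornoyRels k l)

/-- The image `gₙ` in `G̃` of the `n`-th generator. -/
def gg (k l : ℤ → ℤ) (n : ℤ) : Gtil k l := PresentedGroup.of n

/-- The element `a_{i,m} = g_{-m}^{-(k(-m+1)-1)} ⋯ g_{i-1}^{-(k i - 1)} * g_i` of `G̃`. -/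
def aElt (k l : ℤ → ℤ) (i m : ℤ) : Gtil k l :=
  (((List.range (i + m).toNat).map
      (fun t => gg k l (-m + (t : ℤ)) ^ (-(k (-m + (t : ℤ) + 1) - 1)))).prod) * gg k l i

/-- The generating set `{a_{i,m} : m ≥ 0, -m ≤ i ≤ m}` of the positive cone. -/
def aGenSet (k l : ℤ → ℤ) : Set (Gtil k l) :=
  {x | ∃ m i : ℤ, 0 ≤ m ∧ -m ≤ i ∧ i ≤ m ∧ x = aElt k l i m}

/-- The subsemigroup `P̃` of `G̃` generated by the `a_{i,m}`, viewed as a set. -/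
def Ptil (k l : ℤ → ℤ) : Set (Gtil k l) :=
  (Subsemigroup.closure (aGenSet k l) : Subsemigroup (Gtil k l))

/-- The subgroup `G_(m)` of `G̃` generated by `g_{-m}, …, g_m`. -/
def Gsub (k l : ℤ → ℤ) (m : ℤ) : Subgroup (Gtil k l) :=
  Subgroup.closure {x | ∃ j : ℤ, -m ≤ j ∧ j ≤ m ∧ x = gg k l j}

/-- `P` is a positive cone of the group `G`: it is closed under multiplication and
`G` is the disjoint union of `P`, `P⁻¹` and `{1}`. -/
def IsPositiveCone {G : Type*} [Group G] (P : Set G) : Prop :=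
  (∀ a ∈ P, ∀ b ∈ P, a * b ∈ P) ∧
  (∀ g : G, g ∈ P ∨ g⁻¹ ∈ P ∨ g = 1) ∧
  (∀ g ∈ P, g⁻¹ ∉ P) ∧ (1 : G) ∉ P

/-- `C` is a subgroup of `H` which is convex with respect to the set `Q`
(a positive cone of `H`): whenever `c₁, c₂ ∈ C` and `g ∈ H` satisfy
`c₁⁻¹ * g ∈ Q ∪ {1}` and `g⁻¹ * c₂ ∈ Q ∪ {1}`, then `g ∈ C`. -/
def IsConvexIn {G : Type*} [Group G] (H : Subgroup G) (Q : Set G) (C : Subgroup G) : Prop :=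
  C ≤ H ∧ ∀ c₁ ∈ C, ∀ c₂ ∈ C, ∀ g ∈ H,
    c₁⁻¹ * g ∈ Q ∪ {1} → g⁻¹ * c₂ ∈ Q ∪ {1} → g ∈ C

-- relation lemma
lemma gg_rel (k l : ℤ → ℤ) (n : ℤ) : gg k l (n - 1) ^ k n = gg k l n ^ l n := by
  have hmem : FreeGroup.of (n - 1) ^ k n * FreeGroup.of n ^ (-(l n)) ∈
      Subgroup.normalClosure (dehornoyRels k l) :=
    Subgroup.subset_normalClosure ⟨n, rfl⟩
  have h1 : (PresentedGroup.mk (dehornoyRels k l))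
      (FreeGroup.of (n - 1) ^ k n * FreeGroup.of n ^ (-(l n))) = 1 :=
    (QuotientGroup.eq_one_iff _).mpr hmem
  rw [map_mul, map_zpow, map_zpow] at h1
  have h2 : gg k l (n - 1) ^ k n * gg k l n ^ (-(l n)) = 1 := h1
  rw [zpow_neg] at h2
  exact (mul_inv_eq_one.mp h2)

lemma Ptil_mul (k l : ℤ → ℤ) {x y : Gtil k l} (hx : x ∈ Ptil k l) (hy : y ∈ Ptil k l) :
    x * y ∈ Ptil k l := Subsemigroup.mul_mem _ hx hy

lemma Ptil_pow (k l : ℤ → ℤ) {x : Gtil k l} (hx : x ∈ Ptil k l) (t : ℤ) (ht : 1 ≤ t) :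
    x ^ t ∈ Ptil k l := by
  have hnat : ∀ s : ℕ, x ^ (s + 1) ∈ Ptil k l := by
    intro s
    induction s with
    | zero => simpa using hx
    | succ s ih => rw [pow_succ]; exact Ptil_mul k l ih hx
  have h1 : t = ((t.toNat - 1 + 1 : ℕ) : ℤ) := by omega
  rw [h1, zpow_natCast]
  exact hnat _

/-- The prefix word `w = g_{-M}^{-(k(-M+1)-1)} ⋯ g_{-M+j-1}^{-(k(-M+j)-1)}`. -/
def wprod (k l : ℤ → ℤ) (M j : ℕ) : Gtil k l :=
  ((List.range j).map
    (fun t : ℕ => gg k l (-(M : ℤ) + (t : ℤ)) ^ (-(k (-(M : ℤ) + (t : ℤ) + 1) - 1)))).prod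

lemma flatMap_cast {α : Type*} (j : ℕ) (f : ℤ → α) :
    List.map f ((List.range j).flatMap fun a => [(a : ℤ)]) =
      List.map (fun t : ℕ => f (t : ℤ)) (List.range j) := by
  induction j with
  | zero => simp
  | succ j ih => rw [List.range_succ]; simp_all

lemma aElt_eq_wprod (k l : ℤ → ℤ) (M j : ℕ) :
    aElt k l (-(M : ℤ) + j) (M : ℤ) = wprod k l M j * gg k l (-(M : ℤ) + j) := by
  unfold aElt wprod
  have h1 : ((-(M : ℤ) + j) + M).toNat = j := by omega
  rw [h1]
  congr 1
  exact congrArg List.prod (by simp [List.map_flatMap]; exact List.map_eq_flatMap.symm)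

lemma gg_of_wprod (k l : ℤ → ℤ) (M j : ℕ) (hj : j ≤ 2 * M)
    (hw : (wprod k l M j)⁻¹ ∈ Ptil k l ∪ {1}) : gg k l (-(M : ℤ) + j) ∈ Ptil k l := by
  have ha : aElt k l (-(M : ℤ) + j) (M : ℤ) ∈ Ptil k l :=
    Subsemigroup.subset_closure ⟨(M : ℤ), -(M : ℤ) + j, by omega, by omega, by omega, rfl⟩
  have hg : gg k l (-(M : ℤ) + j) = (wprod k l M j)⁻¹ * aElt k l (-(M : ℤ) + j) (M : ℤ) := by
    rw [aElt_eq_wprod]; group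
  rw [hg]
  rcases hw with hw | hw
  · exact Ptil_mul k l hw ha
  · rw [Set.mem_singleton_iff] at hw; rw [hw, one_mul]; exact ha

lemma wprod_inv_mem (k l : ℤ → ℤ) (hk : ∀ n : ℤ, 2 ≤ k n) (M : ℕ) :
    ∀ j : ℕ, j ≤ 2 * M → (wprod k l M j)⁻¹ ∈ Ptil k l ∪ {1} := by
  intro j
  induction j with
  | zero => intro _; right; simp [wprod]
  | succ j ih =>
    intro hj
    have hj' : j ≤ 2 * M := by omega
    have hw := ih hj'
    have hgj : gg k l (-(M : ℤ) + j) ∈ Ptil k l := gg_of_wprod k l M j hj' hw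
    have hsucc : wprod k l M (j + 1) =
        wprod k l M j * gg k l (-(M : ℤ) + j) ^ (-(k (-(M : ℤ) + j + 1) - 1)) := by
      unfold wprod
      rw [List.range_succ, List.map_append, List.prod_append]
      simp
    have hpos : gg k l (-(M : ℤ) + j) ^ (k (-(M : ℤ) + j + 1) - 1) ∈ Ptil k l :=
      Ptil_pow k l hgj _ (by have := hk (-(M : ℤ) + j + 1); omega)
    have hinv : (wprod k l M (j + 1))⁻¹ =
        gg k l (-(M : ℤ) + j) ^ (k (-(M : ℤ) + j + 1) - 1) * (wprod k l M j)⁻¹ := by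
      rw [hsucc, mul_inv_rev, zpow_neg, inv_inv]
    rw [hinv]
    left
    rcases hw with hw | hw
    · exact Ptil_mul k l hpos hw
    · rw [Set.mem_singleton_iff] at hw; rw [hw, mul_one]; exact hpos

lemma gg_mem_Ptil (k l : ℤ → ℤ) (hk : ∀ n : ℤ, 2 ≤ k n) (n : ℤ) : gg k l n ∈ Ptil k l := by
  set M := n.natAbs with hM
  have h1 : n = -(M : ℤ) + ((n + M).toNat : ℕ) := by omega
  rw [h1]
  exact gg_of_wprod k l M _ (by omega)
    (wprod_inv_mem k l hk M _ (by omega))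

lemma gg_mem_Gsub (k l : ℤ → ℤ) {j m : ℤ} (h1 : -m ≤ j) (h2 : j ≤ m) :
    gg k l j ∈ Gsub k l m := Subgroup.subset_closure ⟨j, h1, h2, rfl⟩

lemma mem_of_pow_mem (k l : ℤ → ℤ) (hk : ∀ n : ℤ, 2 ≤ k n) (m : ℤ)
    (C : Subgroup (Gtil k l))
    (hC : IsConvexIn (Gsub k l (m + 1)) (Ptil k l ∩ (Gsub k l (m + 1) : Set (Gtil k l))) C)
    (x : Gtil k l) (hxP : x ∈ Ptil k l) (hxG : x ∈ Gsub k l (m + 1))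
    (e : ℤ) (he : 2 ≤ e) (hxe : x ^ e ∈ C) : x ∈ C := by
  obtain ⟨_, hconv⟩ := hC
  refine hconv 1 C.one_mem (x ^ e) hxe x hxG ?_ ?_
  · left
    rw [inv_one, one_mul]
    exact ⟨hxP, hxG⟩
  · left
    have hx' : x⁻¹ * x ^ e = x ^ (e - 1) := by group
    rw [hx']
    exact ⟨Ptil_pow k l hxP _ (by omega), Subgroup.zpow_mem _ hxG _⟩


theorem stmt18 (k l : ℤ → ℤ) (hk : ∀ n : ℤ, 2 ≤ k n) (hl : ∀ n : ℤ, 2 ≤ l n)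
    (m : ℤ) (hm : 0 ≤ m) :
    ∀ C : Subgroup (Gtil k l),
      IsConvexIn (Gsub k l (m + 1)) (Ptil k l ∩ (Gsub k l (m + 1) : Set (Gtil k l))) C →
      gg k l m ^ k (m + 1) ∈ C →
      gg k l m ∈ C ∧ gg k l (m + 1) ∈ C := by
  intro C hC hpow
  have hgm : gg k l m ∈ C :=
    mem_of_pow_mem k l hk m C hC _ (gg_mem_Ptil k l hk m)
      (gg_mem_Gsub k l (by omega) (by omega)) _ (hk (m + 1)) hpow
  have hrel : gg k l m ^ k (m + 1) = gg k l (m + 1) ^ l (m + 1) := by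
    have := gg_rel k l (m + 1)
    rwa [show m + 1 - 1 = m by ring] at this
  rw [hrel] at hpow
  have hgm1 : gg k l (m + 1) ∈ C :=
    mem_of_pow_mem k l hk m C hC _ (gg_mem_Ptil k l hk (m + 1))
      (gg_mem_Gsub k l (by omega) (by omega)) _ (hl (m + 1)) hpow
  exact ⟨hgm, hgm1⟩
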